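/- In the 2-colored token shift instance constructed from a 3-dimensional matching instance (X, Y, Z, T) with |X| = |Y| = |Z| = m, |T| = n, and m ≤ n: if there exists a permutation π of the vertex set V that is a product of at most 3n elements of 𝒞 ∪ 𝒞⁻¹ and satisfies f_t = f_0 ∘ π, then T contains a matching (a subset M ⊆ T with |M| = m such that every element of X ∪ Y ∪ Z occurs in some triple of M). -/

import Mathlib

/-- The vertex set of the 2-colored token shift instance built from a 3DM instance:
the disjoint union of `X`, `Y`, `Z` (each a copy of `Fin m`), the two extra vertices
`u` and `w` (modeled by `Bool`: `true = u`, `false = w`), the triplet vertices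
`t_{i,j}` (`Fin n × Fin 3`), and the path vertices `v_1, …, v_{3n-3m}`. -/
abbrev Vtx (m n : ℕ) : Type :=
  Fin m ⊕ Fin m ⊕ Fin m ⊕ Bool ⊕ (Fin n × Fin 3) ⊕ Fin (3 * n - 3 * m)

namespace Vtx

variable {m n : ℕ}

def VX (a : Fin m) : Vtx m n := Sum.inl a
def VY (a : Fin m) : Vtx m n := Sum.inr (Sum.inl a)
def VZ (a : Fin m) : Vtx m n := Sum.inr (Sum.inr (Sum.inl a))
def Vu : Vtx m n := Sum.inr (Sum.inr (Sum.inr (Sum.inl true)))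
def Vw : Vtx m n := Sum.inr (Sum.inr (Sum.inr (Sum.inl false)))
def VT (i : Fin n) (j : Fin 3) : Vtx m n :=
  Sum.inr (Sum.inr (Sum.inr (Sum.inr (Sum.inl (i, j)))))
def VV (i : Fin (3 * n - 3 * m)) : Vtx m n :=
  Sum.inr (Sum.inr (Sum.inr (Sum.inr (Sum.inr i))))

set_option synthInstance.maxSize 1024 in
/-- The cycle set `𝒞`: for every triple `t_i = (x, y, z)`, the three blue 5-cycles
`(u t_{i,1} t_{i,2} t_{i,3} x)`, `(u t_{i,1} t_{i,2} t_{i,3} y)`,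
`(u t_{i,1} t_{i,2} t_{i,3} z)`, and the red cycle
`(t_{i,3} t_{i,2} t_{i,1} v_1 v_2 … v_{3n-3m} w)`. -/
def cycleSet (T : Fin n → Fin m × Fin m × Fin m) : Set (Equiv.Perm (Vtx m n)) :=
  {π | ∃ i : Fin n,
    π = List.formPerm [Vu, VT i 0, VT i 1, VT i 2, VX (T i).1] ∨
    π = List.formPerm [Vu, VT i 0, VT i 1, VT i 2, VY (T i).2.1] ∨
    π = List.formPerm [Vu, VT i 0, VT i 1, VT i 2, VZ (T i).2.2] ∨
    π = List.formPerm
          ([VT i 2, VT i 1, VT i 0] ++ (List.finRange (3 * n - 3 * m)).map VV ++ [Vw])}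

/-- The initial token placement: black (`true`) exactly on the triplet vertices. -/
def f0 : Vtx m n → Bool := fun v =>
  match v with
  | Sum.inr (Sum.inr (Sum.inr (Sum.inr (Sum.inl _)))) => true
  | _ => false

/-- The final token placement: black (`true`) exactly on `X ∪ Y ∪ Z ∪ {v_1,…,v_{3n-3m}}`. -/
def ft : Vtx m n → Bool := fun v =>
  match v with
  | Sum.inl _ => true
  | Sum.inr (Sum.inl _) => true
  | Sum.inr (Sum.inr (Sum.inl _)) => true
  | Sum.inr (Sum.inr (Sum.inr (Sum.inr (Sum.inr _)))) => true
  | _ => false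

end Vtx

/-- The 3DM instance `T` (a set of `n` triples over `X × Y × Z`, each a copy of `Fin m`)
contains a matching: `m` of the triples cover every element of `X`, `Y` and `Z`. -/
def HasMatching (m n : ℕ) (T : Fin n → Fin m × Fin m × Fin m) : Prop :=
  ∃ S : Finset (Fin n), S.card = m ∧
    (∀ a : Fin m, ∃ i ∈ S, (T i).1 = a) ∧
    (∀ a : Fin m, ∃ i ∈ S, (T i).2.1 = a) ∧
    (∀ a : Fin m, ∃ i ∈ S, (T i).2.2 = a)

namespace TokenShift
open Vtx List

set_option synthInstance.maxSize 1024

variable {m n : ℕ}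

def ep (T : Fin n → Fin m × Fin m × Fin m) (i : Fin n) : Fin 4 → Vtx m n
  | 0 => VX (T i).1
  | 1 => VY (T i).2.1
  | 2 => VZ (T i).2.2
  | 3 => Vu

def blueL (T : Fin n → Fin m × Fin m × Fin m) (i : Fin n) (k : Fin 4) : List (Vtx m n) :=
  [Vu, VT i 0, VT i 1, VT i 2, ep T i k]

def redL (i : Fin n) : List (Vtx m n) :=
  [VT i 2, VT i 1, VT i 0] ++ (List.finRange (3 * n - 3 * m)).map VV ++ [Vw]

def cyc (T : Fin n → Fin m × Fin m × Fin m) (i : Fin n) (k : Fin 4) : Equiv.Perm (Vtx m n) :=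
  if k = 3 then (redL (m := m) i).formPerm else (blueL T i k).formPerm

variable {T : Fin n → Fin m × Fin m × Fin m}

lemma ep_ne_u (i : Fin n) {k : Fin 4} (hk : k ≠ 3) : ep T i k ≠ Vu := by
  fin_cases k <;> simp_all [ep, VX, VY, VZ, Vu]

lemma ep_ne_t (i i' : Fin n) {k : Fin 4} (hk : k ≠ 3) (j : Fin 3) : ep T i k ≠ VT i' j := by
  fin_cases k <;> simp_all [ep, VX, VY, VZ, VT]

lemma u_ne_t (i : Fin n) (j : Fin 3) : (Vu : Vtx m n) ≠ VT i j := by simp [Vu, VT]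

lemma t_eq_t {i i' : Fin n} {j j' : Fin 3} : (VT i j : Vtx m n) = VT i' j' ↔ i = i' ∧ j = j' := by
  simp [VT, Prod.ext_iff]

lemma nodup_blueL (i : Fin n) {k : Fin 4} (hk : k ≠ 3) : (blueL T i k).Nodup := by
  fin_cases k
  · simp [blueL, ep, Vu, VT, VX, Prod.ext_iff, Fin.ext_iff]
  · simp [blueL, ep, Vu, VT, VY, Prod.ext_iff, Fin.ext_iff]
  · simp [blueL, ep, Vu, VT, VZ, Prod.ext_iff, Fin.ext_iff]
  · simp at hk

lemma blue_u (i : Fin n) {k : Fin 4} (hk : k ≠ 3) : cyc T i k Vu = VT i 0 := by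
  rw [cyc, if_neg hk]
  exact List.formPerm_apply_head _ _ _ (nodup_blueL i hk)

lemma blue_t0 (i : Fin n) {k : Fin 4} (hk : k ≠ 3) : cyc T i k (VT i 0) = VT i 1 := by
  rw [cyc, if_neg hk]
  exact List.formPerm_apply_lt_getElem (blueL T i k) (nodup_blueL i hk) 1 (by simp [blueL])

lemma blue_t1 (i : Fin n) {k : Fin 4} (hk : k ≠ 3) : cyc T i k (VT i 1) = VT i 2 := by
  rw [cyc, if_neg hk]
  exact List.formPerm_apply_lt_getElem (blueL T i k) (nodup_blueL i hk) 2 (by simp [blueL])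

lemma blue_t2 (i : Fin n) {k : Fin 4} (hk : k ≠ 3) : cyc T i k (VT i 2) = ep T i k := by
  rw [cyc, if_neg hk]
  exact List.formPerm_apply_lt_getElem (blueL T i k) (nodup_blueL i hk) 3 (by simp [blueL])

lemma blue_ep (i : Fin n) {k : Fin 4} (hk : k ≠ 3) : cyc T i k (ep T i k) = Vu := by
  rw [cyc, if_neg hk]
  have := List.formPerm_apply_getElem (blueL T i k) (nodup_blueL i hk) 4 (by simp [blueL])
  simpa [blueL] using this

lemma blue_fix (i : Fin n) {k : Fin 4} (hk : k ≠ 3) {v : Vtx m n} (hv : v ∉ blueL T i k) :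
    cyc T i k v = v := by
  rw [cyc, if_neg hk]
  exact List.formPerm_apply_of_notMem hv

def nxt : ℕ → Vtx m n := fun k => if h : k < 3 * n - 3 * m then VV ⟨k, h⟩ else Vw

lemma length_redL (i : Fin n) : (redL (m := m) i).length = (3 * n - 3 * m) + 4 := by
  simp [redL]

lemma nodup_redL (i : Fin n) : (redL (m := m) i).Nodup := by
  simp [redL, List.nodup_append, VT, VV, Vw, Prod.ext_iff, Fin.ext_iff, List.disjoint_left,
    Function.Injective, (List.nodup_finRange _).map]
  exact (List.nodup_finRange _).map (fun a b h => by simpa [VV] using h)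

lemma redL_get (i : Fin n) (k : ℕ) (h : 3 + k < (redL (m := m) i).length) :
    (redL (m := m) i)[3 + k] = nxt k := by
  simp only [redL] at h ⊢
  rw [List.getElem_append]
  rcases lt_or_ge k (3 * n - 3 * m) with hk | hk
  · rw [dif_pos (by simp only [List.length_append, List.length_cons, List.length_map,
        List.length_finRange, List.length_nil]; omega),
      List.getElem_append, dif_neg (by simp only [List.length_cons, List.length_nil]; omega)]
    simp [nxt, hk, Fin.ext_iff]
  · have h2 : 3 + k < 3 * n - 3 * m + 4 := by simp at h; omega
    have hk' : k = 3 * n - 3 * m := by omega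
    subst hk'
    rw [dif_neg (by simp only [List.length_append, List.length_cons, List.length_map,
        List.length_finRange, List.length_nil]; omega)]
    simp [nxt]

lemma red_t2 (i : Fin n) : cyc T i 3 (VT i 2) = VT i 1 := by
  rw [cyc, if_pos rfl]
  have := List.formPerm_apply_lt_getElem (redL (m := m) i) (nodup_redL i) 0
    (by rw [length_redL]; omega)
  simpa [redL] using this

lemma red_t1 (i : Fin n) : cyc T i 3 (VT i 1) = VT i 0 := by
  rw [cyc, if_pos rfl]
  have := List.formPerm_apply_lt_getElem (redL (m := m) i) (nodup_redL i) 1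
    (by rw [length_redL]; omega)
  simpa [redL] using this

lemma red_t0 (i : Fin n) : cyc T i 3 (VT i 0) = nxt 0 := by
  rw [cyc, if_pos rfl]
  have hb : (2 : ℕ) + 1 < (redL (m := m) i).length := by rw [length_redL]; omega
  have this := List.formPerm_apply_lt_getElem (redL (m := m) i) (nodup_redL i) 2 hb
  have e2 : (redL (m := m) i)[2]'(by rw [length_redL]; omega) = VT i 0 := by simp [redL]
  have e3 : (redL (m := m) i)[2+1]'hb = nxt 0 := redL_get i 0 (by rw [length_redL]; omega)
  rw [← e2, ← e3]
  exact this

lemma red_vv (i : Fin n) (k : ℕ) (hk : k < 3 * n - 3 * m) :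
    cyc T i 3 (VV ⟨k, hk⟩) = nxt (k + 1) := by
  rw [cyc, if_pos rfl]
  have hb : 3 + k + 1 < (redL (m := m) i).length := by rw [length_redL]; omega
  have this := List.formPerm_apply_lt_getElem (redL (m := m) i) (nodup_redL i) (3 + k) hb
  have e2 : (redL (m := m) i)[3 + k]'(by rw [length_redL]; omega) = VV ⟨k, hk⟩ := by
    rw [redL_get i k (by rw [length_redL]; omega)]; simp [nxt, hk]
  have e3 : (redL (m := m) i)[3 + k + 1]'hb = nxt (k + 1) :=
    redL_get i (k + 1) (by rw [length_redL]; omega)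
  rw [← e2, ← e3]
  exact this

lemma red_w (i : Fin n) : cyc T i 3 (Vw : Vtx m n) = VT i 2 := by
  rw [cyc, if_pos rfl]
  have this := List.formPerm_apply_getElem (redL (m := m) i) (nodup_redL i)
    (3 + (3 * n - 3 * m)) (by rw [length_redL]; omega)
  have e2 : (3 + (3 * n - 3 * m) + 1) % (redL (m := m) i).length = 0 := by
    rw [length_redL, show 3 + (3 * n - 3 * m) + 1 = (3 * n - 3 * m) + 4 from by omega,
      Nat.mod_self]
  simp only [e2] at this
  have e1 : (redL (m := m) i)[3 + (3 * n - 3 * m)]'(by rw [length_redL]; omega) = Vw := by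
    rw [redL_get i (3 * n - 3 * m) (by rw [length_redL]; omega)]
    simp [nxt]
  rw [e1] at this
  have e0 : (redL (m := m) i)[0]'(by rw [length_redL]; omega) = VT i 2 := rfl
  rw [e0] at this
  exact this

lemma red_fix (i : Fin n) {v : Vtx m n} (hv : v ∉ redL (m := m) i) :
    cyc T i 3 v = v := by
  rw [cyc, if_pos rfl]
  exact List.formPerm_apply_of_notMem hv

/-! ### descriptors, runs, counts -/

abbrev Desc (n : ℕ) := Fin n × Fin 4 × Bool

variable (T) in
def toPerm (e : Desc n) : Equiv.Perm (Vtx m n) :=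
  if e.2.2 then cyc T e.1 e.2.1 else (cyc T e.1 e.2.1)⁻¹

variable (T) in
def run (f : Vtx m n → Bool) : List (Desc n) → (Vtx m n → Bool)
  | [] => f
  | e :: d => run (f ∘ toPerm T e) d

lemma run_append (f : Vtx m n → Bool) (d1 d2 : List (Desc n)) :
    run T f (d1 ++ d2) = run T (run T f d1) d2 := by
  induction d1 generalizing f with
  | nil => rfl
  | cons e d ih => simp [run, ih]

lemma run_singleton (f : Vtx m n → Bool) (e : Desc n) :
    run T f [e] = f ∘ toPerm T e := rfl

lemma run_eq_comp_prod (f : Vtx m n → Bool) (d : List (Desc n)) :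
    run T f d = f ∘ ⇑(d.map (toPerm T)).prod := by
  induction d generalizing f with
  | nil => simp [run]
  | cons e d ih =>
    funext v
    simp only [run, ih, List.map_cons, List.prod_cons, Function.comp_apply,
      Equiv.Perm.coe_mul]

lemma exists_desc (l : List (Equiv.Perm (Vtx m n)))
    (h : ∀ γ ∈ l, γ ∈ Vtx.cycleSet T ∨ γ⁻¹ ∈ Vtx.cycleSet T) :
    ∃ d : List (Desc n), l = d.map (toPerm T) := by
  induction l with
  | nil => exact ⟨[], rfl⟩
  | cons γ l ih =>
    obtain ⟨d, hd⟩ := ih (fun γ' h' => h γ' (List.mem_cons_of_mem _ h'))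
    have hγ : ∃ e : Desc n, γ = toPerm T e := by
      have hcyc : ∀ π ∈ Vtx.cycleSet T, (∃ i k, π = cyc T i k) := by
        rintro π ⟨j, hj | hj | hj | hj⟩
        · exact ⟨j, 0, by rw [hj, cyc, if_neg (by decide)]; rfl⟩
        · exact ⟨j, 1, by rw [hj, cyc, if_neg (by decide)]; rfl⟩
        · exact ⟨j, 2, by rw [hj, cyc, if_neg (by decide)]; rfl⟩
        · exact ⟨j, 3, by rw [hj, cyc, if_pos rfl]; rfl⟩
      rcases h γ (List.mem_cons_self) with hc | hc
      · obtain ⟨i, k, hik⟩ := hcyc γ hc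
        exact ⟨(i, k, true), by simp [toPerm, hik]⟩
      · obtain ⟨i, k, hik⟩ := hcyc γ⁻¹ hc
        exact ⟨(i, k, false), by simp [toPerm, ← hik]⟩
    obtain ⟨e, he⟩ := hγ
    exact ⟨e :: d, by simp [he, hd]⟩

def bn (b : Bool) : ℤ := if b then 1 else 0

lemma bn_nonneg (b : Bool) : 0 ≤ bn b := by cases b <;> simp [bn]
lemma bn_le_one (b : Bool) : bn b ≤ 1 := by cases b <;> simp [bn]

variable (T) in
def ci (f : Vtx m n → Bool) (i : Fin n) : ℤ :=
  bn (f (VT i 0)) + bn (f (VT i 1)) + bn (f (VT i 2))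

def cV (f : Vtx m n → Bool) : ℤ :=
  ∑ k ∈ Finset.range (3 * n - 3 * m), bn (f (nxt k))

/-! ### fixed points -/

lemma fix_inv {α : Type*} {γ : Equiv.Perm α} {x : α} (h : γ x = x) : γ⁻¹ x = x := by
  conv_lhs => rw [← h]
  exact γ.symm_apply_apply x

lemma mem_blueL_iff {v : Vtx m n} {i : Fin n} {k : Fin 4} :
    v ∈ blueL T i k ↔ v = Vu ∨ v = VT i 0 ∨ v = VT i 1 ∨ v = VT i 2 ∨ v = ep T i k := by
  simp [blueL]

lemma mem_redL_iff {v : Vtx m n} {i : Fin n} :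
    v ∈ redL (m := m) i ↔ v = VT i 2 ∨ v = VT i 1 ∨ v = VT i 0 ∨ (∃ kk, v = VV kk) ∨ v = Vw := by
  simp [redL, eq_comm]

lemma cyc_fix_vt {i i' : Fin n} (h : i' ≠ i) (k : Fin 4) (j : Fin 3) :
    cyc T i k (VT i' j) = VT i' j := by
  by_cases hk : k = 3
  · subst hk
    refine red_fix i ?_
    rw [mem_redL_iff]
    push_neg
    refine ⟨?_, ?_, ?_, ?_, ?_⟩ <;>
      (simp [VT, VV, Vw, Prod.ext_iff]; try (intro hi; exact absurd hi h))
  · refine blue_fix i hk ?_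
    rw [mem_blueL_iff]
    push_neg
    refine ⟨?_, ?_, ?_, ?_, ?_⟩
    · exact fun hc => u_ne_t i' j hc.symm
    · intro hc; rw [t_eq_t] at hc; exact h hc.1
    · intro hc; rw [t_eq_t] at hc; exact h hc.1
    · intro hc; rw [t_eq_t] at hc; exact h hc.1
    · exact fun hc => ep_ne_t i i' hk j hc.symm

lemma cyc_fix_vu (i : Fin n) : cyc T i 3 (Vu : Vtx m n) = Vu := by
  refine red_fix i ?_
  rw [mem_redL_iff]
  push_neg
  refine ⟨?_, ?_, ?_, ?_, ?_⟩ <;> simp [VT, VV, Vw, Vu]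

lemma cyc_fix_vw {i : Fin n} {k : Fin 4} (hk : k ≠ 3) : cyc T i k (Vw : Vtx m n) = Vw := by
  refine blue_fix i hk ?_
  rw [mem_blueL_iff]
  push_neg
  refine ⟨?_, ?_, ?_, ?_, ?_⟩
  · simp [Vu, Vw]
  any_goals simp [VT, Vw]
  fin_cases k <;> simp_all [ep, VX, VY, VZ, Vw]

lemma cyc_fix_vv {i : Fin n} {k : Fin 4} (hk : k ≠ 3) (kk : Fin (3 * n - 3 * m)) :
    cyc T i k (VV kk) = VV kk := by
  refine blue_fix i hk ?_
  rw [mem_blueL_iff]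
  push_neg
  refine ⟨?_, ?_, ?_, ?_, ?_⟩
  · simp [Vu, VV]
  any_goals simp [VT, VV]
  fin_cases k <;> simp_all [ep, VX, VY, VZ, VV]

lemma cyc_fix_x {a : Fin m} {i : Fin n} {k : Fin 4} (h : ¬(k = 0 ∧ (T i).1 = a)) :
    cyc T i k (VX a) = VX a := by
  by_cases hk : k = 3
  · subst hk
    refine red_fix i ?_
    rw [mem_redL_iff]; push_neg
    refine ⟨?_, ?_, ?_, ?_, ?_⟩ <;> simp [VT, VV, Vw, VX]
  · refine blue_fix i hk ?_
    rw [mem_blueL_iff]; push_neg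
    refine ⟨?_, ?_, ?_, ?_, ?_⟩
    · simp [Vu, VX]
    any_goals simp [VT, VX]
    fin_cases k <;> simp_all [ep, VX, VY, VZ, eq_comm]

lemma cyc_fix_y {a : Fin m} {i : Fin n} {k : Fin 4} (h : ¬(k = 1 ∧ (T i).2.1 = a)) :
    cyc T i k (VY a) = VY a := by
  by_cases hk : k = 3
  · subst hk
    refine red_fix i ?_
    rw [mem_redL_iff]; push_neg
    refine ⟨?_, ?_, ?_, ?_, ?_⟩ <;> simp [VT, VV, Vw, VY]
  · refine blue_fix i hk ?_
    rw [mem_blueL_iff]; push_neg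
    refine ⟨?_, ?_, ?_, ?_, ?_⟩
    · simp [Vu, VY]
    any_goals simp [VT, VY]
    fin_cases k <;> simp_all [ep, VX, VY, VZ, eq_comm]

lemma cyc_fix_z {a : Fin m} {i : Fin n} {k : Fin 4} (h : ¬(k = 2 ∧ (T i).2.2 = a)) :
    cyc T i k (VZ a) = VZ a := by
  by_cases hk : k = 3
  · subst hk
    refine red_fix i ?_
    rw [mem_redL_iff]; push_neg
    refine ⟨?_, ?_, ?_, ?_, ?_⟩ <;> simp [VT, VV, Vw, VZ]
  · refine blue_fix i hk ?_
    rw [mem_blueL_iff]; push_neg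
    refine ⟨?_, ?_, ?_, ?_, ?_⟩
    · simp [Vu, VZ]
    any_goals simp [VT, VZ]
    fin_cases k <;> simp_all [ep, VX, VY, VZ, eq_comm]

lemma toPerm_fix {e : Desc n} {v : Vtx m n} (h : cyc T e.1 e.2.1 v = v) : toPerm T e v = v := by
  unfold toPerm
  split
  · exact h
  · exact fix_inv h

/-! ### step equalities -/

lemma inv_eval {α : Type*} {γ : Equiv.Perm α} {x y : α} (h : γ x = y) : γ⁻¹ y = x := by
  rw [← h]; exact γ.symm_apply_apply x

lemma toPerm_true (i : Fin n) (k : Fin 4) :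
    toPerm T (i, k, true) = cyc T i k := rfl

lemma toPerm_false (i : Fin n) (k : Fin 4) :
    toPerm T (i, k, false) = (cyc T i k)⁻¹ := rfl

lemma ci_fix (f : Vtx m n → Bool) {e : Desc n} {i : Fin n} (h : e.1 ≠ i) :
    ci (f ∘ toPerm T e) i = ci f i := by
  have hfix : ∀ j : Fin 3, toPerm T e (VT i j) = VT i j := fun j =>
    toPerm_fix (cyc_fix_vt (Ne.symm h) e.2.1 j)
  simp [ci, hfix]

lemma ci_blue_fwd (f : Vtx m n → Bool) (i : Fin n) {k : Fin 4} (hk : k ≠ 3) :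
    ci (f ∘ toPerm T (i, k, true)) i = ci f i + bn (f (ep T i k)) - bn (f (VT i 0)) := by
  simp only [ci, Function.comp_apply, toPerm_true]
  rw [blue_t0 i hk, blue_t1 i hk, blue_t2 i hk]
  ring

lemma ci_blue_inv (f : Vtx m n → Bool) (i : Fin n) {k : Fin 4} (hk : k ≠ 3) :
    ci (f ∘ toPerm T (i, k, false)) i = ci f i + bn (f Vu) - bn (f (VT i 2)) := by
  simp only [ci, Function.comp_apply, toPerm_false]
  rw [inv_eval (blue_u i hk), inv_eval (blue_t0 i hk), inv_eval (blue_t1 i hk)]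
  ring

lemma ci_red_fwd (f : Vtx m n → Bool) (i : Fin n) :
    ci (f ∘ toPerm T (i, 3, true)) i = ci f i + bn (f (nxt 0)) - bn (f (VT i 2)) := by
  simp only [ci, Function.comp_apply, toPerm_true]
  rw [red_t0 i, red_t1 i, red_t2 i]
  ring

lemma ci_red_inv (f : Vtx m n → Bool) (i : Fin n) :
    ci (f ∘ toPerm T (i, 3, false)) i = ci f i + bn (f Vw) - bn (f (VT i 0)) := by
  simp only [ci, Function.comp_apply, toPerm_false]
  rw [inv_eval (red_t1 i), inv_eval (red_t2 i), inv_eval (red_w i)]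
  ring

lemma cV_blue (f : Vtx m n → Bool) (i : Fin n) {k : Fin 4} (hk : k ≠ 3) (s : Bool) :
    cV (f ∘ toPerm T (i, k, s)) = cV f := by
  unfold cV
  refine Finset.sum_congr rfl fun kk hkk => ?_
  rw [Finset.mem_range] at hkk
  have : toPerm T (i, k, s) (nxt kk) = nxt kk := by
    have : nxt (m := m) (n := n) kk = VV ⟨kk, hkk⟩ := by simp [nxt, hkk]
    rw [this]
    exact toPerm_fix (cyc_fix_vv hk _)
  rw [Function.comp_apply, this]

lemma sum_shift (g : ℕ → ℤ) (K : ℕ) :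
    ∑ k ∈ Finset.range K, g (k + 1) = (∑ k ∈ Finset.range K, g k) + g K - g 0 := by
  have h1 := Finset.sum_range_succ' g K
  have h2 := Finset.sum_range_succ g K
  omega

lemma cV_red_fwd (f : Vtx m n → Bool) (i : Fin n) :
    cV (f ∘ toPerm T (i, 3, true)) = cV f + bn (f Vw) - bn (f (nxt 0)) := by
  have hstep : ∀ kk ∈ Finset.range (3 * n - 3 * m),
      bn ((f ∘ toPerm T (i, 3, true)) (nxt kk)) = bn (f (nxt (kk + 1))) := by
    intro kk hkk
    rw [Finset.mem_range] at hkk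
    have h1 : nxt (m := m) (n := n) kk = VV ⟨kk, hkk⟩ := by simp [nxt, hkk]
    rw [Function.comp_apply, toPerm_true, h1, red_vv i kk hkk]
  unfold cV
  rw [Finset.sum_congr rfl hstep, sum_shift (fun k => bn (f (nxt k)))]
  have : nxt (m := m) (n := n) (3 * n - 3 * m) = Vw := by simp [nxt]
  rw [this]

lemma cV_red_inv (f : Vtx m n → Bool) (i : Fin n) (hK : 0 < 3 * n - 3 * m) :
    cV (f ∘ toPerm T (i, 3, false))
      = cV f + bn (f (VT i 0)) - bn (f (nxt (3 * n - 3 * m - 1))) := by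
  obtain ⟨K', hK'⟩ : ∃ K', 3 * n - 3 * m = K' + 1 := ⟨3 * n - 3 * m - 1, by omega⟩
  unfold cV
  rw [hK', Nat.add_sub_cancel,
    Finset.sum_range_succ' (fun kk => bn ((f ∘ toPerm T (i, 3, false)) (nxt kk))) K']
  have h0 : bn ((f ∘ toPerm T (i, 3, false)) (nxt 0)) = bn (f (VT i 0)) := by
    rw [Function.comp_apply, toPerm_false, inv_eval (red_t0 i)]
  have hsucc : ∀ kk ∈ Finset.range K',
      bn ((f ∘ toPerm T (i, 3, false)) (nxt (kk + 1))) = bn (f (nxt kk)) := by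
    intro kk hkk
    rw [Finset.mem_range] at hkk
    have hkK : kk < 3 * n - 3 * m := by omega
    rw [Function.comp_apply, toPerm_false, inv_eval (red_vv i kk hkK)]
    congr 1
    simp [nxt, hkK]
  rw [Finset.sum_congr rfl hsucc, h0, Finset.sum_range_succ (fun k => bn (f (nxt k))) K']
  ring

lemma cV_zero (f : Vtx m n → Bool) (h : 3 * n - 3 * m = 0) : cV f = 0 := by
  unfold cV
  rw [h]
  simp

/-! ### bounds and initial/final values -/

lemma ci_nonneg (f : Vtx m n → Bool) (i : Fin n) : 0 ≤ ci f i := by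
  have := bn_nonneg (f (VT i 0)); have := bn_nonneg (f (VT i 1)); have := bn_nonneg (f (VT i 2))
  unfold ci; omega

lemma ci_le_three (f : Vtx m n → Bool) (i : Fin n) : ci f i ≤ 3 := by
  have := bn_le_one (f (VT i 0)); have := bn_le_one (f (VT i 1)); have := bn_le_one (f (VT i 2))
  unfold ci; omega

lemma cV_nonneg (f : Vtx m n → Bool) : 0 ≤ cV f :=
  Finset.sum_nonneg fun k _ => bn_nonneg _

lemma cV_le (f : Vtx m n → Bool) : cV f ≤ (3 * n - 3 * m : ℕ) := by
  calc cV f ≤ ∑ _k ∈ Finset.range (3 * n - 3 * m), (1 : ℤ) :=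
        Finset.sum_le_sum fun k _ => bn_le_one _
    _ = (3 * n - 3 * m : ℕ) := by simp

lemma ci_f0 (i : Fin n) : ci (f0 : Vtx m n → Bool) i = 3 := by simp [ci, f0, VT, bn]

lemma ci_ft (i : Fin n) : ci (ft : Vtx m n → Bool) i = 0 := by simp [ci, ft, VT, bn]

lemma cV_f0 : cV (f0 : Vtx m n → Bool) = 0 := by
  unfold cV
  refine Finset.sum_eq_zero fun k hk => ?_
  rw [Finset.mem_range] at hk
  simp [nxt, hk, f0, VV, bn]

lemma cV_ft : cV (ft : Vtx m n → Bool) = (3 * n - 3 * m : ℕ) := by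
  unfold cV
  have h : ∀ k ∈ Finset.range (3 * n - 3 * m), bn ((ft : Vtx m n → Bool) (nxt k)) = 1 := by
    intro k hk
    rw [Finset.mem_range] at hk
    simp [nxt, hk, ft, VV, bn]
  rw [Finset.sum_congr rfl h, Finset.sum_const, Finset.card_range]
  simp

/-! ### counting -/

def cI (i : Fin n) (d : List (Desc n)) : ℕ := d.countP (fun e => decide (e.1 = i))
def cR (d : List (Desc n)) : ℕ := d.countP (fun e => decide (e.2.1 = (3 : Fin 4)))
def cK (k : Fin 4) (d : List (Desc n)) : ℕ := d.countP (fun e => decide (e.2.1 = k))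
def cB (i : Fin n) (d : List (Desc n)) : ℕ :=
  d.countP (fun e => decide (e.1 = i) && !decide (e.2.1 = (3 : Fin 4)))
def cRI (i : Fin n) (d : List (Desc n)) : ℕ :=
  d.countP (fun e => decide (e.1 = i) && decide (e.2.1 = (3 : Fin 4)))

lemma countP_split {α : Type*} (l : List α) (p q : α → Bool) :
    l.countP (fun a => p a && q a) + l.countP (fun a => p a && !q a) = l.countP p := by
  induction l with
  | nil => simp
  | cons a l ih =>
    simp only [List.countP_cons]
    cases hp : p a <;> cases hq : q a <;> simp [hp, hq] <;> omega

lemma cB_add_cRI (i : Fin n) (d : List (Desc n)) : cB i d + cRI i d = cI i d := by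
  rw [cB, cRI, cI, Nat.add_comm]
  exact countP_split d _ _

lemma length_key {α β : Type*} [Fintype β] [DecidableEq β] (d : List α) (key : α → β) :
    d.length = ∑ b : β, d.countP (fun e => decide (key e = b)) := by
  induction d with
  | nil => simp
  | cons e d ih =>
    simp only [List.countP_cons, List.length_cons, ih, Finset.sum_add_distrib]
    have h1 : ∑ b : β, (if decide (key e = b) = true then 1 else 0)
        = ∑ b : β, (if key e = b then 1 else 0) := by
      refine Finset.sum_congr rfl fun b _ => by simp
    rw [h1, Finset.sum_ite_eq Finset.univ (key e) (fun _ => 1)]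
    simp

lemma length_eq_sum_cI (d : List (Desc n)) : d.length = ∑ i : Fin n, cI i d :=
  length_key d (fun e => e.1)

lemma length_eq_sum_cK (d : List (Desc n)) :
    d.length = cK 0 d + cK 1 d + cK 2 d + cK 3 d := by
  have h := length_key d (fun e => e.2.1)
  rw [h, Fin.sum_univ_four]
  rfl

lemma countP_add_countP_not {α : Type*} (l : List α) (p : α → Bool) :
    l.countP p + l.countP (fun a => !p a) = l.length := by
  induction l with
  | nil => simp
  | cons a l ih =>
    simp only [List.countP_cons, List.length_cons]
    cases hp : p a <;> simp [hp] <;> omega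

lemma sum_cB (d : List (Desc n)) :
    ∑ i : Fin n, cB i d = d.length - cR d := by
  have h1 : ∀ i : Fin n, cB i d
      = (d.filter (fun e => !decide (e.2.1 = (3 : Fin 4)))).countP (fun e => decide (e.1 = i)) := by
    intro i
    rw [List.countP_filter]
    rfl
  have h2 := length_key (d.filter (fun e => !decide (e.2.1 = (3 : Fin 4)))) (fun e : Desc n => e.1)
  have h3 : (d.filter (fun e => !decide (e.2.1 = (3 : Fin 4)))).length
      = d.countP (fun e => !decide (e.2.1 = (3 : Fin 4))) := by
    rw [List.countP_eq_length_filter]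
  have h4 := countP_add_countP_not d (fun e => decide (e.2.1 = (3 : Fin 4)))
  have h5 : ∑ i : Fin n, cB i d
      = ∑ i : Fin n, (d.filter (fun e => !decide (e.2.1 = (3 : Fin 4)))).countP
          (fun e => decide (e.1 = i)) :=
    Finset.sum_congr rfl fun i _ => h1 i
  rw [h5, ← h2, h3]
  rw [cR] at *
  omega

/-! ### run inequalities -/

lemma ci_step (f : Vtx m n → Bool) (e : Desc n) (i : Fin n) :
    ci f i - (if e.1 = i then 1 else 0) ≤ ci (f ∘ toPerm T e) i := by
  obtain ⟨i', k, s⟩ := e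
  by_cases hii : i' = i
  · subst hii
    rw [if_pos rfl]
    by_cases hk : k = 3
    · subst hk
      cases s
      · rw [ci_red_inv]
        have := bn_nonneg (f (Vw : Vtx m n)); have := bn_le_one (f (VT i' 0))
        omega
      · rw [ci_red_fwd]
        have := bn_nonneg (f (nxt (m := m) (n := n) 0)); have := bn_le_one (f (VT i' 2))
        omega
    · cases s
      · rw [ci_blue_inv f i' hk]
        have := bn_nonneg (f (Vu : Vtx m n)); have := bn_le_one (f (VT i' 2))
        omega
      · rw [ci_blue_fwd f i' hk]
        have := bn_nonneg (f (ep T i' k)); have := bn_le_one (f (VT i' 0))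
        omega
  · rw [ci_fix f hii, if_neg hii]
    omega

lemma ci_run (f : Vtx m n → Bool) (d : List (Desc n)) (i : Fin n) :
    ci f i - cI i d ≤ ci (run T f d) i := by
  induction d generalizing f with
  | nil => simp [run, cI]
  | cons e d ih =>
    have h1 := ih (f ∘ toPerm T e)
    have h2 := ci_step (T := T) f e i
    have h3 : cI i (e :: d) = (if e.1 = i then 1 else 0) + cI i d := by
      rw [cI, List.countP_cons, cI]
      by_cases he : e.1 = i <;> simp [he] <;> omega
    rw [show run T f (e :: d) = run T (f ∘ toPerm T e) d from rfl]
    by_cases he : e.1 = i <;> simp [he] at h2 h3 <;> rw [h3] <;> push_cast <;> omega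

lemma cV_step (f : Vtx m n → Bool) (e : Desc n) :
    cV (f ∘ toPerm T e) ≤ cV f + (if e.2.1 = 3 then 1 else 0) := by
  obtain ⟨i, k, s⟩ := e
  by_cases hk : k = 3
  · subst hk
    rw [if_pos rfl]
    cases s
    · rcases Nat.eq_zero_or_pos (3 * n - 3 * m) with h0 | h0
      · rw [cV_zero _ h0, cV_zero _ h0]
        have := cV_nonneg (f := f)
        omega
      · rw [cV_red_inv f i h0]
        have := bn_le_one (f (VT i 0)); have := bn_nonneg (f (nxt (m := m) (n := n) (3 * n - 3 * m - 1)))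
        omega
    · rw [cV_red_fwd]
      have := bn_le_one (f (Vw : Vtx m n)); have := bn_nonneg (f (nxt (m := m) (n := n) 0))
      omega
  · rw [cV_blue f i hk, if_neg hk]
    omega

lemma cV_run (f : Vtx m n → Bool) (d : List (Desc n)) :
    cV (run T f d) ≤ cV f + cR d := by
  induction d generalizing f with
  | nil => simp [run, cR]
  | cons e d ih =>
    have h1 := ih (f ∘ toPerm T e)
    have h2 := cV_step (T := T) f e
    have h3 : cR (e :: d) = (if e.2.1 = 3 then 1 else 0) + cR d := by
      rw [cR, List.countP_cons, cR]
      by_cases he : e.2.1 = 3 <;> simp [he] <;> omega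
    rw [show run T f (e :: d) = run T (f ∘ toPerm T e) d from rfl]
    by_cases he : e.2.1 = 3 <;> simp [he] at h2 h3 <;> rw [h3] <;> push_cast <;> omega

/-! ### movers -/

lemma exists_mover (f : Vtx m n → Bool) (d : List (Desc n)) (v : Vtx m n)
    (h : run T f d v ≠ f v) : ∃ e ∈ d, toPerm T e v ≠ v := by
  induction d generalizing f with
  | nil => exact absurd rfl h
  | cons e d ih =>
    by_cases he : toPerm T e v = v
    · have h' : run T (f ∘ toPerm T e) d v ≠ (f ∘ toPerm T e) v := by
        rw [show run T f (e :: d) = run T (f ∘ toPerm T e) d from rfl] at h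
        simpa [Function.comp_apply, he] using h
      obtain ⟨e', he', hm⟩ := ih (f ∘ toPerm T e) h'
      exact ⟨e', List.mem_cons_of_mem _ he', hm⟩
    · exact ⟨e, List.mem_cons_self, he⟩

lemma moved_x {e : Desc n} {a : Fin m} (h : toPerm T e (VX a) ≠ VX a) :
    e.2.1 = 0 ∧ (T e.1).1 = a := by
  by_contra hc
  exact h (toPerm_fix (cyc_fix_x hc))

lemma moved_y {e : Desc n} {a : Fin m} (h : toPerm T e (VY a) ≠ VY a) :
    e.2.1 = 1 ∧ (T e.1).2.1 = a := by
  by_contra hc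
  exact h (toPerm_fix (cyc_fix_y hc))

lemma moved_z {e : Desc n} {a : Fin m} (h : toPerm T e (VZ a) ≠ VZ a) :
    e.2.1 = 2 ∧ (T e.1).2.2 = a := by
  by_contra hc
  exact h (toPerm_fix (cyc_fix_z hc))

/-! ### exactness -/

lemma bn_true {b : Bool} (h : bn b = 1) : b = true := by cases b <;> simp_all [bn]
lemma bn_false {b : Bool} (h : bn b = 0) : b = false := by cases b <;> simp_all [bn]

lemma split_run {d d1 d2 : List (Desc n)} {e : Desc n} (hsplit : d = d1 ++ e :: d2) :
    run T f0 d = run T ((run T f0 d1) ∘ toPerm T e) d2 := by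
  rw [hsplit, show d1 ++ e :: d2 = (d1 ++ [e]) ++ d2 by simp, run_append, run_append,
    run_singleton]

lemma ci_exact {d : List (Desc n)} (hrun : run T f0 d = (ft : Vtx m n → Bool))
    (hcnt3 : ∀ i : Fin n, cI i d = 3) {d1 d2 : List (Desc n)} {e : Desc n}
    (hsplit : d = d1 ++ e :: d2) :
    ci ((run T f0 d1) ∘ toPerm T e) e.1 = ci (run T f0 d1) e.1 - 1 := by
  have hA : (3 : ℤ) - cI e.1 d1 ≤ ci (run T f0 d1) e.1 := by
    have h := ci_run (T := T) f0 d1 e.1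
    rwa [ci_f0] at h
  have hrest : run T ((run T f0 d1) ∘ toPerm T e) d2 = ft := by
    rw [← split_run hsplit, hrun]
  have hB : ci ((run T f0 d1) ∘ toPerm T e) e.1 - cI e.1 d2 ≤ (0 : ℤ) := by
    have h := ci_run (T := T) ((run T f0 d1) ∘ toPerm T e) d2 e.1
    rw [hrest, ci_ft] at h
    omega
  have hC := ci_step (T := T) (run T f0 d1) e e.1
  rw [if_pos rfl] at hC
  have hD : cI e.1 d1 + 1 + cI e.1 d2 = 3 := by
    have h := hcnt3 e.1
    rw [hsplit, cI, List.countP_append, List.countP_cons] at h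
    simp at h
    rw [cI, cI]
    omega
  have h1 := ci_le_three (run T f0 d1) e.1
  have h2 := ci_le_three ((run T f0 d1) ∘ toPerm T e) e.1
  have h3 := ci_nonneg (run T f0 d1) e.1
  have h4 := ci_nonneg ((run T f0 d1) ∘ toPerm T e) e.1
  omega

lemma cV_exact {d : List (Desc n)} (hrun : run T f0 d = (ft : Vtx m n → Bool))
    (hcR : cR d = 3 * n - 3 * m) {d1 d2 : List (Desc n)} {e : Desc n}
    (hsplit : d = d1 ++ e :: d2) (hred : e.2.1 = 3) :
    cV ((run T f0 d1) ∘ toPerm T e) = cV (run T f0 d1) + 1 := by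
  have hA : cV (run T f0 d1) ≤ cR d1 := by
    have h := cV_run (T := T) f0 d1
    rwa [cV_f0, zero_add] at h
  have hrest : run T ((run T f0 d1) ∘ toPerm T e) d2 = ft := by
    rw [← split_run hsplit, hrun]
  have hB : ((3 * n - 3 * m : ℕ) : ℤ) ≤ cV ((run T f0 d1) ∘ toPerm T e) + cR d2 := by
    have h := cV_run (T := T) ((run T f0 d1) ∘ toPerm T e) d2
    rw [hrest, cV_ft] at h
    omega
  have hC := cV_step (T := T) (run T f0 d1) e
  rw [if_pos hred] at hC
  have hD : cR d1 + 1 + cR d2 = 3 * n - 3 * m := by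
    have h := hcR
    rw [hsplit, cR, List.countP_append, List.countP_cons] at h
    simp only [decide_eq_true_eq, hred, if_pos] at h
    rw [cR, cR]
    omega
  omega

/-! ### prefix invariants -/

lemma w_prefix {d : List (Desc n)} (hrun : run T f0 d = (ft : Vtx m n → Bool))
    (hcR : cR d = 3 * n - 3 * m) :
    ∀ d1 : List (Desc n), (∃ dr, d = d1 ++ dr) → run T f0 d1 (Vw : Vtx m n) = false := by
  intro d1
  induction d1 using List.reverseRecOn with
  | nil => intro _; rfl
  | append_singleton d1 e ih =>
    rintro ⟨dr, hd⟩
    have hd' : d = d1 ++ (e :: dr) := by simpa [List.append_assoc] using hd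
    have hw := ih ⟨e :: dr, hd'⟩
    rw [run_append, run_singleton]
    obtain ⟨i, k, s⟩ := e
    by_cases hk : k = 3
    · subst hk
      have hKpos : 0 < 3 * n - 3 * m := by
        have hpos : 0 < cR d := by
          rw [hd', cR, List.countP_append, List.countP_cons]
          simp
        omega
      have hex := cV_exact hrun hcR hd' rfl
      cases s
      · have heq := (cV_red_inv (run T f0 d1) i hKpos).symm.trans hex
        have h1 := bn_le_one ((run T f0 d1) (VT i 0))
        have h0 := bn_nonneg ((run T f0 d1) (nxt (m := m) (n := n) (3 * n - 3 * m - 1)))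
        have hzero : bn ((run T f0 d1) (nxt (m := m) (n := n) (3 * n - 3 * m - 1))) = 0 := by
          omega
        have hval : toPerm T (i, 3, false) (Vw : Vtx m n)
            = nxt (m := m) (n := n) (3 * n - 3 * m - 1) := by
          rw [toPerm_false]
          have hvv := red_vv (T := T) i (3 * n - 3 * m - 1) (by omega)
          rw [show 3 * n - 3 * m - 1 + 1 = 3 * n - 3 * m from by omega,
            show nxt (m := m) (n := n) (3 * n - 3 * m) = Vw from by simp [nxt]] at hvv
          rw [inv_eval hvv]
          simp [nxt, show 3 * n - 3 * m - 1 < 3 * n - 3 * m from by omega]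
        rw [Function.comp_apply, hval]
        exact bn_false hzero
      · have heq := (cV_red_fwd (run T f0 d1) i).symm.trans hex
        have h0 := bn_nonneg ((run T f0 d1) (nxt (m := m) (n := n) 0))
        rw [hw] at heq
        simp [bn] at heq
        omega
    · rw [Function.comp_apply, toPerm_fix (cyc_fix_vw hk), hw]

lemma u_absorb {d : List (Desc n)} (hrun : run T f0 d = (ft : Vtx m n → Bool))
    (hcnt3 : ∀ i : Fin n, cI i d = 3) :
    ∀ d2 d1 : List (Desc n), d = d1 ++ d2 → run T f0 d1 (Vu : Vtx m n) = true →
      run T f0 d (Vu : Vtx m n) = true := by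
  intro d2
  induction d2 with
  | nil =>
    intro d1 hd hu
    rw [hd, List.append_nil]
    exact hu
  | cons e d2 ih =>
    intro d1 hd hu
    apply ih (d1 ++ [e]) (by simpa [List.append_assoc] using hd)
    rw [run_append, run_singleton]
    obtain ⟨i, k, s⟩ := e
    by_cases hk : k = 3
    · subst hk
      rw [Function.comp_apply, toPerm_fix (cyc_fix_vu i), hu]
    · have hex := ci_exact hrun hcnt3 hd
      cases s
      · exfalso
        have hex' : ci ((run T f0 d1) ∘ toPerm T (i, k, false)) i
            = ci (run T f0 d1) i - 1 := hex
        have heq := (ci_blue_inv (run T f0 d1) i hk).symm.trans hex'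
        have h2 := bn_le_one ((run T f0 d1) (VT i 2))
        rw [hu] at heq
        simp [bn] at heq
        omega
      · have hex' : ci ((run T f0 d1) ∘ toPerm T (i, k, true)) i
            = ci (run T f0 d1) i - 1 := hex
        have heq := (ci_blue_fwd (run T f0 d1) i hk).symm.trans hex'
        have h1 := bn_nonneg ((run T f0 d1) (ep T i k))
        have h2 := bn_le_one ((run T f0 d1) (VT i 0))
        have ht0 : (run T f0 d1) (VT i 0) = true := bn_true (by omega)
        rw [Function.comp_apply, toPerm_true, blue_u i hk, ht0]

lemma u_prefix {d : List (Desc n)} (hrun : run T f0 d = (ft : Vtx m n → Bool))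
    (hcnt3 : ∀ i : Fin n, cI i d = 3) :
    ∀ d1 : List (Desc n), (∃ dr, d = d1 ++ dr) → run T f0 d1 (Vu : Vtx m n) = false := by
  rintro d1 ⟨dr, hd⟩
  cases hu : run T f0 d1 (Vu : Vtx m n)
  · rfl
  · exfalso
    have habs := u_absorb hrun hcnt3 dr d1 hd hu
    rw [hrun] at habs
    exact Bool.noConfusion (show (false : Bool) = true from habs)

lemma no_fwd {d : List (Desc n)} (hrun : run T f0 d = (ft : Vtx m n → Bool))
    (hcnt3 : ∀ i : Fin n, cI i d = 3) (hcR : cR d = 3 * n - 3 * m) :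
    ∀ (d1 : List (Desc n)) (e : Desc n) (dr : List (Desc n)),
      d = d1 ++ e :: dr → e.2.2 = false := by
  intro d1 e dr hd
  obtain ⟨i, k, s⟩ := e
  cases s
  · rfl
  · exfalso
    by_cases hk : k = 3
    · subst hk
      have hex := cV_exact hrun hcR hd rfl
      have heq := (cV_red_fwd (run T f0 d1) i).symm.trans hex
      have hw := w_prefix hrun hcR d1 ⟨(i, 3, true) :: dr, hd⟩
      have h0 := bn_nonneg ((run T f0 d1) (nxt (m := m) (n := n) 0))
      rw [hw] at heq
      simp [bn] at heq
      omega
    · have hex := ci_exact hrun hcnt3 hd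
      have hex' : ci ((run T f0 d1) ∘ toPerm T (i, k, true)) i
          = ci (run T f0 d1) i - 1 := hex
      have heq := (ci_blue_fwd (run T f0 d1) i hk).symm.trans hex'
      have h1 := bn_nonneg ((run T f0 d1) (ep T i k))
      have h2 := bn_le_one ((run T f0 d1) (VT i 0))
      have ht0 : (run T f0 d1) (VT i 0) = true := bn_true (by omega)
      have hu := u_prefix hrun hcnt3 (d1 ++ [(i, k, true)])
        ⟨dr, by simpa [List.append_assoc] using hd⟩
      rw [run_append, run_singleton, Function.comp_apply, toPerm_true, blue_u i hk, ht0] at hu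
      exact Bool.noConfusion hu

lemma queue {d : List (Desc n)} (hrun : run T f0 d = (ft : Vtx m n → Bool))
    (hcnt3 : ∀ i : Fin n, cI i d = 3) (hcR : cR d = 3 * n - 3 * m) :
    ∀ d1 : List (Desc n), (∃ dr, d = d1 ++ dr) → ∀ i : Fin n,
      (cB i d1 = 0 ∨ cRI i d1 = 0) ∧
      ∀ j : Fin 3, run T f0 d1 (VT i j)
        = decide (cB i d1 ≤ (j : ℕ) ∧ (j : ℕ) < 3 - cRI i d1) := by
  intro d1
  induction d1 using List.reverseRecOn with
  | nil =>
    intro _ i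
    refine ⟨Or.inl rfl, fun j => ?_⟩
    have hj : cB i ([] : List (Desc n)) ≤ (j : ℕ) ∧ (j : ℕ) < 3 - cRI i ([] : List (Desc n)) := by
      refine ⟨Nat.zero_le _, ?_⟩
      have := j.isLt
      show (j : ℕ) < 3 - 0
      omega
    exact (decide_eq_true hj).symm
  | append_singleton d1 e ih =>
    rintro ⟨dr, hd⟩ i
    have hd' : d = d1 ++ (e :: dr) := by simpa [List.append_assoc] using hd
    have IH := ih ⟨e :: dr, hd'⟩
    obtain ⟨i', k, s⟩ := e
    have hs : s = false := no_fwd hrun hcnt3 hcR d1 (i', k, s) dr hd'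
    subst hs
    have hcBapp : ∀ ii : Fin n, cB ii (d1 ++ [(i', k, false)])
        = cB ii d1 + (if i' = ii ∧ k ≠ 3 then 1 else 0) := by
      intro ii
      rw [cB, List.countP_append, cB]
      congr 1
      by_cases h1 : i' = ii <;> by_cases h2 : k = 3 <;>
        simp [List.countP_cons, h1, h2]
    have hcRIapp : ∀ ii : Fin n, cRI ii (d1 ++ [(i', k, false)])
        = cRI ii d1 + (if i' = ii ∧ k = 3 then 1 else 0) := by
      intro ii
      rw [cRI, List.countP_append, cRI]
      congr 1
      by_cases h1 : i' = ii <;> by_cases h2 : k = 3 <;>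
        simp [List.countP_cons, h1, h2]
    rw [run_append, run_singleton]
    by_cases hii : i' = i
    · subst hii
      obtain ⟨hdisj, hval⟩ := IH i'
      have hv0 : run T f0 d1 (VT i' 0)
          = decide (cB i' d1 ≤ 0 ∧ 0 < 3 - cRI i' d1) := by simpa using hval 0
      have hv1 : run T f0 d1 (VT i' 1)
          = decide (cB i' d1 ≤ 1 ∧ 1 < 3 - cRI i' d1) := by simpa using hval 1
      have hv2 : run T f0 d1 (VT i' 2)
          = decide (cB i' d1 ≤ 2 ∧ 2 < 3 - cRI i' d1) := by simpa using hval 2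
      by_cases hk : k = 3
      · subst hk
        have hex : ci ((run T f0 d1) ∘ toPerm T (i', 3, false)) i'
            = ci (run T f0 d1) i' - 1 := ci_exact hrun hcnt3 hd'
        have heq := (ci_red_inv (run T f0 d1) i').symm.trans hex
        have hb0 := bn_nonneg ((run T f0 d1) (Vw : Vtx m n))
        have hb1 := bn_le_one ((run T f0 d1) (VT i' 0))
        have ht0 : (run T f0 d1) (VT i' 0) = true := bn_true (by omega)
        have hw : (run T f0 d1) (Vw : Vtx m n) = false := bn_false (by omega)
        rw [ht0] at hv0
        have hcond : cB i' d1 ≤ 0 ∧ 0 < 3 - cRI i' d1 := of_decide_eq_true hv0.symm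
        have hB' : cB i' (d1 ++ [(i', 3, false)]) = 0 := by
          rw [hcBapp]
          simp
          omega
        have hR' : cRI i' (d1 ++ [(i', 3, false)]) = cRI i' d1 + 1 := by
          rw [hcRIapp]
          simp
        refine ⟨Or.inl hB', fun j => ?_⟩
        rw [hB', hR']
        fin_cases j <;>
          simp only [Fin.zero_eta, Fin.mk_one, Fin.reduceFinMk, Fin.val_zero, Fin.val_one,
            Fin.val_two]
        · rw [Function.comp_apply, toPerm_false, inv_eval (red_t1 i'), hv1]
          refine decide_eq_decide.mpr ?_
          omega
        · rw [Function.comp_apply, toPerm_false, inv_eval (red_t2 i'), hv2]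
          refine decide_eq_decide.mpr ?_
          omega
        · rw [Function.comp_apply, toPerm_false, inv_eval (red_w i'), hw]
          symm
          rw [decide_eq_false_iff_not]
          omega
      · have hex : ci ((run T f0 d1) ∘ toPerm T (i', k, false)) i'
            = ci (run T f0 d1) i' - 1 := ci_exact hrun hcnt3 hd'
        have heq := (ci_blue_inv (run T f0 d1) i' hk).symm.trans hex
        have hb0 := bn_nonneg ((run T f0 d1) (Vu : Vtx m n))
        have hb1 := bn_le_one ((run T f0 d1) (VT i' 2))
        have ht2 : (run T f0 d1) (VT i' 2) = true := bn_true (by omega)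
        have hu : (run T f0 d1) (Vu : Vtx m n) = false :=
          u_prefix hrun hcnt3 d1 ⟨_, hd'⟩
        rw [ht2] at hv2
        have hcond : cB i' d1 ≤ 2 ∧ 2 < 3 - cRI i' d1 := of_decide_eq_true hv2.symm
        have hB' : cB i' (d1 ++ [(i', k, false)]) = cB i' d1 + 1 := by
          rw [hcBapp]
          simp [hk]
        have hR' : cRI i' (d1 ++ [(i', k, false)]) = cRI i' d1 := by
          rw [hcRIapp]
          simp [hk]
        have hr0 : cRI i' d1 = 0 := by omega
        refine ⟨Or.inr (by rw [hR']; exact hr0), fun j => ?_⟩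
        rw [hB', hR']
        fin_cases j <;>
          simp only [Fin.zero_eta, Fin.mk_one, Fin.reduceFinMk, Fin.val_zero, Fin.val_one,
            Fin.val_two]
        · rw [Function.comp_apply, toPerm_false, inv_eval (blue_u i' hk), hu]
          symm
          rw [decide_eq_false_iff_not]
          omega
        · rw [Function.comp_apply, toPerm_false, inv_eval (blue_t0 i' hk), hv0]
          refine decide_eq_decide.mpr ?_
          omega
        · rw [Function.comp_apply, toPerm_false, inv_eval (blue_t1 i' hk), hv1]
          refine decide_eq_decide.mpr ?_
          omega
    · have hB' : cB i (d1 ++ [(i', k, false)]) = cB i d1 := by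
        rw [hcBapp]
        simp [hii]
      have hR' : cRI i (d1 ++ [(i', k, false)]) = cRI i d1 := by
        rw [hcRIapp]
        simp [hii]
      obtain ⟨hdisj, hval⟩ := IH i
      refine ⟨by rw [hB', hR']; exact hdisj, fun j => ?_⟩
      rw [hB', hR', Function.comp_apply,
        toPerm_fix (cyc_fix_vt (Ne.symm hii) k j)]
      exact hval j

lemma main (hmn : m ≤ n) (T : Fin n → Fin m × Fin m × Fin m)
    (hseq : ∃ l : List (Equiv.Perm (Vtx m n)),
      l.length ≤ 3 * n ∧
      (∀ γ ∈ l, γ ∈ Vtx.cycleSet T ∨ γ⁻¹ ∈ Vtx.cycleSet T) ∧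
      (Vtx.ft : Vtx m n → Bool) = Vtx.f0 ∘ ⇑l.prod) :
    HasMatching m n T := by
  classical
  obtain ⟨l, hlen, hmem, hend⟩ := hseq
  obtain ⟨d, hd⟩ := exists_desc (T := T) l hmem
  have hrun : run T f0 d = (ft : Vtx m n → Bool) := by
    rw [run_eq_comp_prod, ← hd, ← hend]
  have hdlen : d.length ≤ 3 * n := by
    have h := hlen
    rw [hd, List.length_map] at h
    exact h
  have hA : ∀ i : Fin n, 3 ≤ cI i d := by
    intro i
    have h := ci_run (T := T) f0 d i
    rw [hrun, ci_ft, ci_f0] at h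
    omega
  have hsum := length_eq_sum_cI d
  have hsum3 : ∑ _i : Fin n, (3 : ℕ) = n * 3 := by simp
  have hle : ∑ _i : Fin n, (3 : ℕ) ≤ ∑ i : Fin n, cI i d :=
    Finset.sum_le_sum (fun i _ => hA i)
  have hEq : ∑ _i : Fin n, (3 : ℕ) = ∑ i : Fin n, cI i d := le_antisymm hle (by omega)
  have hcnt3 : ∀ i : Fin n, cI i d = 3 := by
    intro i
    exact ((Finset.sum_eq_sum_iff_of_le (fun i _ => hA i)).mp hEq i (Finset.mem_univ i)).symm
  have hdlen3 : d.length = 3 * n := by omega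
  have hRge : 3 * n - 3 * m ≤ cR d := by
    have h := cV_run (T := T) f0 d
    rw [hrun, cV_ft, cV_f0] at h
    omega
  have hcov0 : ∀ a : Fin m, ∃ e ∈ d, e.2.1 = 0 ∧ (T e.1).1 = a := by
    intro a
    have hne : run T f0 d (VX a : Vtx m n) ≠ f0 (VX a : Vtx m n) := by
      rw [hrun]
      exact fun hc => Bool.noConfusion (show (true : Bool) = false from hc)
    obtain ⟨e, hed, hm2⟩ := exists_mover f0 d (VX a : Vtx m n) hne
    exact ⟨e, hed, moved_x hm2⟩
  have hcov1 : ∀ a : Fin m, ∃ e ∈ d, e.2.1 = 1 ∧ (T e.1).2.1 = a := by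
    intro a
    have hne : run T f0 d (VY a : Vtx m n) ≠ f0 (VY a : Vtx m n) := by
      rw [hrun]
      exact fun hc => Bool.noConfusion (show (true : Bool) = false from hc)
    obtain ⟨e, hed, hm2⟩ := exists_mover f0 d (VY a : Vtx m n) hne
    exact ⟨e, hed, moved_y hm2⟩
  have hcov2 : ∀ a : Fin m, ∃ e ∈ d, e.2.1 = 2 ∧ (T e.1).2.2 = a := by
    intro a
    have hne : run T f0 d (VZ a : Vtx m n) ≠ f0 (VZ a : Vtx m n) := by
      rw [hrun]
      exact fun hc => Bool.noConfusion (show (true : Bool) = false from hc)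
    obtain ⟨e, hed, hm2⟩ := exists_mover f0 d (VZ a : Vtx m n) hne
    exact ⟨e, hed, moved_z hm2⟩
  have hK0 : m ≤ cK 0 d := by
    have hsub : (Finset.univ : Finset (Fin m)) ⊆
        ((d.filter (fun e => decide (e.2.1 = (0 : Fin 4)))).map (fun e => (T e.1).1)).toFinset := by
      intro a _
      rw [List.mem_toFinset]
      obtain ⟨e, hed, hk, hc⟩ := hcov0 a
      exact List.mem_map.mpr ⟨e, List.mem_filter.mpr ⟨hed, by simp [hk]⟩, hc⟩
    calc m = (Finset.univ : Finset (Fin m)).card := by simp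
      _ ≤ _ := Finset.card_le_card hsub
      _ ≤ _ := List.toFinset_card_le _
      _ = cK 0 d := by rw [List.length_map, cK, List.countP_eq_length_filter]
  have hK1 : m ≤ cK 1 d := by
    have hsub : (Finset.univ : Finset (Fin m)) ⊆
        ((d.filter (fun e => decide (e.2.1 = (1 : Fin 4)))).map (fun e => (T e.1).2.1)).toFinset := by
      intro a _
      rw [List.mem_toFinset]
      obtain ⟨e, hed, hk, hc⟩ := hcov1 a
      exact List.mem_map.mpr ⟨e, List.mem_filter.mpr ⟨hed, by simp [hk]⟩, hc⟩
    calc m = (Finset.univ : Finset (Fin m)).card := by simp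
      _ ≤ _ := Finset.card_le_card hsub
      _ ≤ _ := List.toFinset_card_le _
      _ = cK 1 d := by rw [List.length_map, cK, List.countP_eq_length_filter]
  have hK2 : m ≤ cK 2 d := by
    have hsub : (Finset.univ : Finset (Fin m)) ⊆
        ((d.filter (fun e => decide (e.2.1 = (2 : Fin 4)))).map (fun e => (T e.1).2.2)).toFinset := by
      intro a _
      rw [List.mem_toFinset]
      obtain ⟨e, hed, hk, hc⟩ := hcov2 a
      exact List.mem_map.mpr ⟨e, List.mem_filter.mpr ⟨hed, by simp [hk]⟩, hc⟩
    calc m = (Finset.univ : Finset (Fin m)).card := by simp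
      _ ≤ _ := Finset.card_le_card hsub
      _ ≤ _ := List.toFinset_card_le _
      _ = cK 2 d := by rw [List.length_map, cK, List.countP_eq_length_filter]
  have hkinds := length_eq_sum_cK d
  have hcK3 : cK 3 d = cR d := rfl
  have hcR : cR d = 3 * n - 3 * m := by omega
  have hq := queue hrun hcnt3 hcR
  have hqd := hq d ⟨[], (List.append_nil d).symm⟩
  have hS3 : ∀ i : Fin n, 0 < cB i d → cB i d = 3 := by
    intro i hi
    have hdisj := (hqd i).1
    have hsplit := cB_add_cRI i d
    have hc3 := hcnt3 i
    omega
  set S : Finset (Fin n) := Finset.univ.filter (fun i => 0 < cB i d) with hS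
  have hmemS : ∀ e ∈ d, e.2.1 ≠ 3 → e.1 ∈ S := by
    intro e hed hne
    rw [hS, Finset.mem_filter]
    refine ⟨Finset.mem_univ _, ?_⟩
    rw [cB, List.countP_pos_iff]
    exact ⟨e, hed, by simp [hne]⟩
  have hsumB := sum_cB d
  have hsplitS := Finset.sum_filter_add_sum_filter_not Finset.univ
    (fun i => 0 < cB i d) (fun i => cB i d)
  rw [← hS] at hsplitS
  have hsum0 : ∑ i ∈ Finset.univ.filter (fun i => ¬ 0 < cB i d), cB i d = 0 :=
    Finset.sum_eq_zero (fun i hi => by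
      rw [Finset.mem_filter] at hi
      omega)
  have hsumS : ∑ i ∈ S, cB i d = 3 * S.card := by
    have h3 : ∀ i ∈ S, cB i d = 3 := by
      intro i hi
      rw [hS, Finset.mem_filter] at hi
      exact hS3 i hi.2
    calc ∑ i ∈ S, cB i d = ∑ _i ∈ S, 3 := Finset.sum_congr rfl h3
      _ = 3 * S.card := by rw [Finset.sum_const, smul_eq_mul, mul_comm]
  have hcard : S.card = m := by omega
  refine ⟨S, hcard, fun a => ?_, fun a => ?_, fun a => ?_⟩
  · obtain ⟨e, hed, hk, hc⟩ := hcov0 a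
    exact ⟨e.1, hmemS e hed (by rw [hk]; decide), hc⟩
  · obtain ⟨e, hed, hk, hc⟩ := hcov1 a
    exact ⟨e.1, hmemS e hed (by rw [hk]; decide), hc⟩
  · obtain ⟨e, hed, hk, hc⟩ := hcov2 a
    exact ⟨e.1, hmemS e hed (by rw [hk]; decide), hc⟩

end TokenShift

/-- If there is a permutation `π` of the vertex set that is a product of at
most `3 * n` elements of `𝒞 ∪ 𝒞⁻¹` with `f_t = f_0 ∘ π`, then the 3DM instance has a
matching. -/
theorem short_shifting_sequence_implies_matching (m n : ℕ) (hmn : m ≤ n)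
    (T : Fin n → Fin m × Fin m × Fin m) (hT : Function.Injective T)
    (hseq : ∃ l : List (Equiv.Perm (Vtx m n)),
      l.length ≤ 3 * n ∧
      (∀ γ ∈ l, γ ∈ Vtx.cycleSet T ∨ γ⁻¹ ∈ Vtx.cycleSet T) ∧
      (Vtx.ft : Vtx m n → Bool) = Vtx.f0 ∘ ⇑l.prod) :
    HasMatching m n T :=
  TokenShift.main hmn T hseq
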